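/- For any α > 0, any δ with 0 < δ < e, and any complex η with Re(η) > 0, one has ∫₀^δ r^α e^{−ηr} dr = Γ(α+1)/η^{α+1} − ∫_δ^∞ r^α e^{−ηr} dr. Moreover, if Re(η) ≥ 2α/e, then |∫_δ^∞ r^α e^{−ηr} dr| ≤ (2/Re η) · e^{−(δ/2) Re η}. -/

import Mathlib

open MeasureTheory Real Filter Matrix
open scoped Topology

noncomputable section

abbrev V3 := Fin 3 → ℝ
abbrev C3 := Fin 3 → ℂ

/-- bilinear dot product on `ℝ³`. -/
def dotR (u v : V3) : ℝ := ∑ i, u i * v i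
/-- bilinear (non-conjugated) dot product on `ℂ³`. -/
def dotC (u v : C3) : ℂ := ∑ i, u i * v i
/-- componentwise embedding `ℝ³ → ℂ³`. -/
def cst (v : V3) : C3 := fun i => (v i : ℂ)
/-- Euclidean norm on `ℝ³` (as a plain pi type). -/
def enorm3 (x : V3) : ℝ := Real.sqrt (∑ i, x i ^ 2)
/-- Euclidean norm on `ℂ³`. -/
def cnorm3 (u : C3) : ℝ := Real.sqrt (∑ i, ‖u i‖ ^ 2)

/-- the infinite open cone about the axis `e₃` with half-opening angle `θ₀`. -/
def coneK (θ₀ : ℝ) : Set V3 := {x | 0 < enorm3 x ∧ x 2 > Real.cos θ₀ * enorm3 x}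
/-- the truncated cone of radius `r₀` about the axis `e₃` with half-opening angle `θ₀`. -/
def coneKtr (θ₀ r₀ : ℝ) : Set V3 :=
  {x | 0 < enorm3 x ∧ enorm3 x < r₀ ∧ x 2 > Real.cos θ₀ * enorm3 x}

/-- the CGO direction `d = -e₃`. -/
def dvec : V3 := ![0, 0, -1]
/-- the orthogonal direction `d⊥ = (cos φ, sin φ, 0)`. -/
def dperp (φ : ℝ) : V3 := ![Real.cos φ, Real.sin φ, 0]
/-- the CGO phase vector `ρ = τ d + i √(τ²+k²) d⊥`. -/
def rhovec (k τ φ : ℝ) : C3 :=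
  fun i => (τ : ℂ) * (dvec i : ℂ) + Complex.I * (Real.sqrt (τ ^ 2 + k ^ 2) : ℂ) * (dperp φ i : ℂ)
/-- the CGO amplitude vector `p = d⊥ - i √(1+k²/τ²) d`. -/
def pvec (k τ φ : ℝ) : C3 :=
  fun i => (dperp φ i : ℂ) - Complex.I * (Real.sqrt (1 + k ^ 2 / τ ^ 2) : ℂ) * (dvec i : ℂ)
/-- the CGO solution `V(x) = p e^{ρ·x}`. -/
def Vcgo (k τ φ : ℝ) (x : V3) : C3 :=
  fun i => pvec k τ φ i * Complex.exp (dotC (rhovec k τ φ) (cst x))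
/-- the CGO solution `W(x) = (1/(iωμ₀)) (ρ × p) e^{ρ·x}`. -/
def Wcgo (ω μ₀ k τ φ : ℝ) (x : V3) : C3 :=
  fun i => (1 / (Complex.I * ω * μ₀)) * (rhovec k τ φ ⨯₃ pvec k τ φ) i *
    Complex.exp (dotC (rhovec k τ φ) (cst x))

/-- partial derivative in direction `e_j` of a scalar field. -/
def pdC (j : Fin 3) (f : V3 → ℂ) (x : V3) : ℂ := fderiv ℝ f x (Pi.single j 1)
/-- the curl of a `ℂ³`-valued field on `ℝ³`, componentwise via `fderiv`. -/
def curl3 (F : V3 → C3) (x : V3) : C3 :=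
  ![pdC 1 (fun y => F y 2) x - pdC 2 (fun y => F y 1) x,
    pdC 2 (fun y => F y 0) x - pdC 0 (fun y => F y 2) x,
    pdC 0 (fun y => F y 1) x - pdC 1 (fun y => F y 0) x]

/-- electric Herglotz wave function with kernel `g` w.r.t. a surface measure `μS` on `S²`. -/
def Herg (μS : Measure V3) (k₁ : ℝ) (g : V3 → C3) (x : V3) : C3 :=
  fun i => ∫ d, g d i * Complex.exp (Complex.I * (k₁ : ℂ) * (dotR x d : ℂ)) ∂μS

/-- the `H(curl)` norm on a set `Ω`. -/
def HcurlNorm (Ω : Set V3) (F : V3 → C3) : ℝ :=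
  Real.sqrt ((∫ x in Ω, cnorm3 (F x) ^ 2) + ∫ x in Ω, cnorm3 (curl3 F x) ^ 2)

lemma aux_integrable_rpow_exp {s b : ℝ} (hs : -1 < s) (hb : 0 < b) :
    IntegrableOn (fun t : ℝ => t ^ s * Real.exp (-b * t)) (Set.Ioi 0) := by
  simpa using integrableOn_rpow_mul_exp_neg_mul_rpow hs one_pos hb

lemma aux_norm (a : ℝ) (η : ℂ) {r : ℝ} (hr : 0 ≤ r) :
    ‖((r ^ a : ℝ) : ℂ) * Complex.exp (-η * r)‖ = r ^ a * Real.exp (-η.re * r) := by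
  rw [norm_mul, Complex.norm_exp, Complex.norm_real,
    Real.norm_of_nonneg (Real.rpow_nonneg hr _)]
  congr 2
  simp [Complex.mul_re]

lemma aux_cont (a : ℝ) (η : ℂ) :
    ContinuousOn (fun r : ℝ => ((r ^ a : ℝ) : ℂ) * Complex.exp (-η * r)) (Set.Ioi 0) := by
  apply ContinuousOn.mul
  · exact Complex.continuous_ofReal.comp_continuousOn
      (continuousOn_id.rpow_const fun x hx => Or.inl (ne_of_gt hx))
  · exact ((continuous_const.mul Complex.continuous_ofReal).cexp).continuousOn

lemma aux_int (a : ℝ) (ha : 0 < a) (η : ℂ) (hη : 0 < η.re) :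
    IntegrableOn (fun r : ℝ => ((r ^ a : ℝ) : ℂ) * Complex.exp (-η * r)) (Set.Ioi 0) := by
  refine Integrable.mono' (aux_integrable_rpow_exp (s := a) (by linarith) hη)
    ((aux_cont a η).aestronglyMeasurable measurableSet_Ioi) ?_
  filter_upwards [ae_restrict_mem measurableSet_Ioi] with r hr
  rw [aux_norm a η (le_of_lt hr)]

lemma aux_real (a : ℝ) (ha : 0 < a) {x : ℝ} (hx : 0 < x) :
    (∫ r in Set.Ioi (0:ℝ), ((r ^ a : ℝ) : ℂ) * Complex.exp (-(x:ℂ) * r)) =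
      Complex.Gamma ((a : ℂ) + 1) / (x:ℂ) ^ ((a : ℂ) + 1) := by
  have hre : 0 < ((a:ℂ) + 1).re := by simp; linarith
  have h := Complex.integral_cpow_mul_exp_neg_mul_Ioi (a := (a:ℂ)+1) hre hx
  have heq : ∀ r ∈ Set.Ioi (0:ℝ),
      ((r ^ a : ℝ) : ℂ) * Complex.exp (-(x:ℂ) * r)
        = (r:ℂ) ^ ((a:ℂ) + 1 - 1) * Complex.exp (-((x:ℝ) * r)) := by
    intro r hr
    rw [add_sub_cancel_right, ← Complex.ofReal_cpow (le_of_lt hr)]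
    push_cast
    ring_nf
  rw [setIntegral_congr_fun measurableSet_Ioi heq, h, one_div,
    Complex.inv_cpow _ _ (by rw [Complex.arg_ofReal_of_nonneg hx.le]; exact Real.pi_ne_zero.symm)]
  rw [div_eq_inv_mul]

lemma aux_gamma (a : ℝ) (ha : 0 < a) (η : ℂ) (hη : 0 < η.re) :
    (∫ r in Set.Ioi (0:ℝ), ((r ^ a : ℝ) : ℂ) * Complex.exp (-η * r)) =
      Complex.Gamma ((a : ℂ) + 1) / η ^ ((a : ℂ) + 1) := by
  set f : ℂ → ℂ := fun z => ∫ r in Set.Ioi (0:ℝ), ((r ^ a : ℝ) : ℂ) * Complex.exp (-z * r) with hf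
  set g : ℂ → ℂ := fun z => Complex.Gamma ((a:ℂ)+1) / z ^ ((a:ℂ)+1) with hg
  set U : Set ℂ := {z | 0 < z.re} with hU
  have hUopen : IsOpen U := isOpen_lt continuous_const Complex.continuous_re
  have hUconn : IsPreconnected U := (convex_halfSpace_re_gt 0).isPreconnected
  have hfd : DifferentiableOn ℂ f U := by
    intro z₀ hz₀
    have hb : (0:ℝ) < z₀.re := hz₀
    have key := hasDerivAt_integral_of_dominated_loc_of_deriv_le
      (F := fun z r => ((r ^ a : ℝ) : ℂ) * Complex.exp (-z * r))
      (F' := fun z r => -(r:ℂ) * (((r ^ a : ℝ) : ℂ) * Complex.exp (-z * r)))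
      (x₀ := z₀) (μ := volume.restrict (Set.Ioi 0))
      (bound := fun r => r ^ (a+1) * Real.exp (-(z₀.re/2) * r))
      (Metric.ball_mem_nhds z₀ (half_pos hb))
      (Eventually.of_forall fun z => (aux_cont a z).aestronglyMeasurable measurableSet_Ioi)
      (aux_int a ha z₀ hb)
      ((((Complex.continuous_ofReal.neg).continuousOn).mul (aux_cont a z₀)).aestronglyMeasurable
        measurableSet_Ioi)
      ?_ (aux_integrable_rpow_exp (s := a+1) (by linarith) (half_pos hb)) ?_
    · exact (key.2.differentiableAt).differentiableWithinAt
    · filter_upwards [ae_restrict_mem measurableSet_Ioi] with r hr z hz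
      have hr0 : (0:ℝ) < r := hr
      have hrez : z₀.re / 2 ≤ z.re := by
        have h1 : |(z - z₀).re| ≤ ‖z - z₀‖ := Complex.abs_re_le_norm _
        have h2 : ‖z - z₀‖ < z₀.re / 2 := by
          rw [← Complex.dist_eq]; exact Metric.mem_ball.mp hz
        have := abs_le.mp (le_of_lt (lt_of_le_of_lt h1 h2))
        simp only [Complex.sub_re] at this
        linarith [this.1]
      rw [norm_mul, aux_norm a z hr0.le]
      have h3 : ‖-(r:ℂ)‖ = r := by
        rw [norm_neg, Complex.norm_real, Real.norm_eq_abs, abs_of_pos hr0]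
      rw [h3]
      have h4 : r * (r ^ a * Real.exp (-z.re * r)) = r ^ (a+1) * Real.exp (-z.re * r) := by
        rw [Real.rpow_add hr0, Real.rpow_one]; ring
      rw [h4]
      apply mul_le_mul_of_nonneg_left _ (Real.rpow_nonneg hr0.le _)
      apply Real.exp_le_exp.mpr
      nlinarith
    · filter_upwards [ae_restrict_mem measurableSet_Ioi] with r hr z hz
      have h1 : HasDerivAt (fun z : ℂ => -z * r) (-(r:ℂ)) z := by
        simpa using ((hasDerivAt_id z).neg.mul_const (r:ℂ))
      have h3 := (h1.cexp).const_mul (((r ^ a : ℝ) : ℂ))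
      refine h3.congr_deriv ?_
      ring
  have hgd : DifferentiableOn ℂ g U := by
    intro z hz
    have hz0 : (0:ℝ) < z.re := hz
    have h1 : DifferentiableAt ℂ (fun z : ℂ => z ^ ((a:ℂ)+1)) z :=
      differentiableAt_id.cpow (differentiableAt_const _) (Or.inl hz0)
    have hne : z ^ ((a:ℂ)+1) ≠ 0 := by
      intro h
      rcases (Complex.cpow_eq_zero_iff _ _).mp h with ⟨h0, -⟩
      rw [h0] at hz0; simp at hz0
    exact (((differentiableAt_const _).div h1 hne)).differentiableWithinAt
  have hfreq : ∃ᶠ z in 𝓝[≠] (1:ℂ), f z = g z := by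
    have htr : Tendsto (fun n : ℕ => (1 + (n+1:ℝ)⁻¹ : ℝ)) atTop (𝓝 1) := by
      have h0 : Tendsto (fun n : ℕ => ((n:ℝ)+1)⁻¹) atTop (𝓝 0) := by
        exact tendsto_one_div_add_atTop_nhds_zero_nat.congr (fun n => one_div _)
      have := (tendsto_const_nhds (x := (1:ℝ))).add h0
      rwa [add_zero] at this
    have htend : Tendsto (fun n : ℕ => ((1 + (n+1:ℝ)⁻¹ : ℝ) : ℂ)) atTop (𝓝[≠] (1:ℂ)) := by
      apply tendsto_nhdsWithin_of_tendsto_nhds_of_eventually_within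
      · simpa [Function.comp_def] using (Complex.continuous_ofReal.tendsto 1).comp htr
      · apply Eventually.of_forall
        intro n
        simp only [Set.mem_compl_iff, Set.mem_singleton_iff]
        intro h
        have : (1 + (n+1:ℝ)⁻¹ : ℝ) = 1 := by exact_mod_cast h
        have hpos : (0:ℝ) < (n+1:ℝ)⁻¹ := by positivity
        linarith
    apply htend.frequently
    apply Frequently.of_forall
    intro n
    exact aux_real a ha (by positivity)
  have := (hfd.analyticOnNhd hUopen).eqOn_of_preconnected_of_frequently_eq
    (hgd.analyticOnNhd hUopen) hUconn (show (1:ℂ) ∈ U by simp [hU]) hfreq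
  exact this hη

/-- for `α > 0`, `0 < δ < e`, `Re η > 0`:
`∫₀^δ r^α e^{−ηr} dr = Γ(α+1)/η^{α+1} − ∫_δ^∞ r^α e^{−ηr} dr`, and if moreover
`Re η ≥ 2α/e` then `|∫_δ^∞ r^α e^{−ηr} dr| ≤ (2/Re η) e^{−(δ/2) Re η}`. -/
theorem stmt1 (α δ : ℝ) (hα : 0 < α) (hδ : 0 < δ) (hδe : δ < Real.exp 1)
    (η : ℂ) (hη : 0 < η.re) :
    (∫ r in (0:ℝ)..δ, ((r ^ α : ℝ) : ℂ) * Complex.exp (-η * r)) =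
      Complex.Gamma ((α : ℂ) + 1) / η ^ ((α : ℂ) + 1) -
        ∫ r in Set.Ioi δ, ((r ^ α : ℝ) : ℂ) * Complex.exp (-η * r) ∧
    (η.re ≥ 2 * α / Real.exp 1 →
      ‖∫ r in Set.Ioi δ, ((r ^ α : ℝ) : ℂ) * Complex.exp (-η * r)‖ ≤
        2 / η.re * Real.exp (-(δ / 2) * η.re)) := by
  have hInt := aux_int α hα η hη
  have hInt1 : IntegrableOn (fun r : ℝ => ((r ^ α : ℝ) : ℂ) * Complex.exp (-η * r))
      (Set.Ioc 0 δ) := hInt.mono_set Set.Ioc_subset_Ioi_self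
  have hInt2 : IntegrableOn (fun r : ℝ => ((r ^ α : ℝ) : ℂ) * Complex.exp (-η * r))
      (Set.Ioi δ) := hInt.mono_set (Set.Ioi_subset_Ioi hδ.le)
  constructor
  · have hsplit : (∫ r in Set.Ioi (0:ℝ), ((r ^ α : ℝ) : ℂ) * Complex.exp (-η * r)) =
        (∫ r in Set.Ioc 0 δ, ((r ^ α : ℝ) : ℂ) * Complex.exp (-η * r)) +
          ∫ r in Set.Ioi δ, ((r ^ α : ℝ) : ℂ) * Complex.exp (-η * r) := by
      rw [← Set.Ioc_union_Ioi_eq_Ioi hδ.le]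
      exact setIntegral_union (Set.Ioc_disjoint_Ioi le_rfl) measurableSet_Ioi hInt1 hInt2
    rw [intervalIntegral.integral_of_le hδ.le, ← aux_gamma α hα η hη, hsplit]
    ring
  · intro hbd
    set b := η.re with hbdef
    have hb : 0 < b := hη
    have hb2 : 0 < b / 2 := half_pos hb
    have hexpint : IntegrableOn (fun r : ℝ => Real.exp (-(b/2) * r)) (Set.Ioi δ) :=
      exp_neg_integrableOn_Ioi δ hb2
    have step1 : ‖∫ r in Set.Ioi δ, ((r ^ α : ℝ) : ℂ) * Complex.exp (-η * r)‖ ≤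
        ∫ r in Set.Ioi δ, ‖((r ^ α : ℝ) : ℂ) * Complex.exp (-η * r)‖ := by
      exact norm_integral_le_integral_norm _
    have step2 : (∫ r in Set.Ioi δ, ‖((r ^ α : ℝ) : ℂ) * Complex.exp (-η * r)‖) ≤
        ∫ r in Set.Ioi δ, Real.exp (-(b/2) * r) := by
      apply setIntegral_mono_on hInt2.norm hexpint measurableSet_Ioi
      intro r hr
      have hr0 : (0:ℝ) < r := lt_trans hδ hr
      rw [aux_norm α η hr0.le]
      have hlog : Real.log r ≤ r / Real.exp 1 := by
        have h := Real.log_le_sub_one_of_pos (div_pos hr0 (Real.exp_pos 1))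
        rw [Real.log_div hr0.ne' (Real.exp_ne_zero 1), Real.log_exp] at h
        linarith
      have hrpow : r ^ α ≤ Real.exp (b/2 * r) := by
        rw [Real.rpow_def_of_pos hr0]
        apply Real.exp_le_exp.mpr
        have h1 : α * Real.log r ≤ α * (r / Real.exp 1) :=
          mul_le_mul_of_nonneg_left hlog hα.le
        have h2 : α * (r / Real.exp 1) ≤ b/2 * r := by
          rw [ge_iff_le, div_le_iff₀ (Real.exp_pos 1)] at hbd
          have h3 := mul_le_mul_of_nonneg_right hbd hr0.le
          have he := Real.exp_pos 1
          rw [show α * (r / Real.exp 1) = α * r / Real.exp 1 by ring, div_le_iff₀ he]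
          nlinarith
        linarith
      calc r ^ α * Real.exp (-b * r) ≤ Real.exp (b/2 * r) * Real.exp (-b * r) :=
            mul_le_mul_of_nonneg_right hrpow (Real.exp_pos _).le
        _ = Real.exp (-(b/2) * r) := by rw [← Real.exp_add]; ring_nf
    have step3 : (∫ r in Set.Ioi δ, Real.exp (-(b/2) * r)) = 2 / b * Real.exp (-(δ/2) * b) := by
      have hderiv : ∀ x ∈ Set.Ici δ,
          HasDerivAt (fun r : ℝ => -Real.exp (-(b/2) * r) / (b/2)) (Real.exp (-(b/2) * x)) x := by
        intro x _
        have h1 : HasDerivAt (fun r : ℝ => -(b/2) * r) (-(b/2)) x := by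
          simpa using (hasDerivAt_id x).const_mul (-(b/2))
        have h2 := (h1.exp).neg.div_const (b/2)
        refine h2.congr_deriv ?_
        rw [mul_neg, neg_neg, mul_div_cancel_right₀ _ hb2.ne']
      have htends : Tendsto (fun r : ℝ => -Real.exp (-(b/2) * r) / (b/2)) atTop (𝓝 0) := by
        have h1 : Tendsto (fun r : ℝ => Real.exp (-(b/2) * r)) atTop (𝓝 0) :=
          Real.tendsto_exp_atBot.comp (tendsto_id.const_mul_atTop_of_neg (by linarith))
        simpa using (h1.neg.div_const (b/2))
      rw [integral_Ioi_of_hasDerivAt_of_tendsto' hderiv hexpint htends]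
      rw [show -(b/2) * δ = -(δ/2) * b by ring]
      field_simp
      ring
    calc ‖∫ r in Set.Ioi δ, ((r ^ α : ℝ) : ℂ) * Complex.exp (-η * r)‖ ≤
          ∫ r in Set.Ioi δ, Real.exp (-(b/2) * r) := le_trans step1 step2
      _ = 2 / b * Real.exp (-(δ/2) * b) := step3
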